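/- Let f : ℝⁿ → ℝ be differentiable with L_f-Lipschitz gradient on ℝⁿ, and let h : ℝⁿ → ℝ be L_h-Lipschitz. Define Ψ₁(x) = h(x) − min_{‖s‖≤1} (∇f(x)ᵀs + h(x+s)). Then Ψ₁ is Lipschitz continuous with Lipschitz constant L_f + 2·L_h, i.e. |Ψ₁(x) − Ψ₁(y)| ≤ (L_f + 2L_h)·‖x − y‖ for all x, y. -/

import Mathlib

open scoped RealInnerProductSpace

theorem stmt_1 {n : ℕ} (f h : EuclideanSpace ℝ (Fin n) → ℝ)
    (Lf Lh : ℝ)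
    (hf : Differentiable ℝ f)
    (hLf : ∀ x y, ‖gradient f x - gradient f y‖ ≤ Lf * ‖x - y‖)
    (hLh : ∀ x y, |h x - h y| ≤ Lh * ‖x - y‖)
    (Ψ : EuclideanSpace ℝ (Fin n) → ℝ)
    (hΨ : ∀ x, Ψ x = h x - sInf ((fun s => ⟪gradient f x, s⟫ + h (x + s)) ''
        Metric.closedBall (0 : EuclideanSpace ℝ (Fin n)) 1)) :
    ∀ x y, |Ψ x - Ψ y| ≤ (Lf + 2 * Lh) * ‖x - y‖ := by
  set S : EuclideanSpace ℝ (Fin n) → Set ℝ := fun x =>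
    (fun s => ⟪gradient f x, s⟫ + h (x + s)) '' Metric.closedBall 0 1 with hS
  have hne : ∀ x, (S x).Nonempty := fun x =>
    ⟨_, ⟨0, Metric.mem_closedBall_self zero_le_one, rfl⟩⟩
  have hbdd : ∀ x, BddBelow (S x) := by
    intro x
    refine ⟨-‖gradient f x‖ + (h x - |Lh|), ?_⟩
    rintro a ⟨s, hs, rfl⟩
    have hs1 : ‖s‖ ≤ 1 := by simpa using hs
    have h1 : |⟪gradient f x, s⟫| ≤ ‖gradient f x‖ * ‖s‖ := abs_real_inner_le_norm _ _
    have h2 : ‖gradient f x‖ * ‖s‖ ≤ ‖gradient f x‖ :=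
      mul_le_of_le_one_right (norm_nonneg _) hs1
    have h3 : |h (x + s) - h x| ≤ Lh * ‖x + s - x‖ := hLh _ _
    have h4 : Lh * ‖x + s - x‖ ≤ |Lh| := by
      have : ‖x + s - x‖ = ‖s‖ := by simp
      rw [this]
      calc Lh * ‖s‖ ≤ |Lh| * ‖s‖ := mul_le_mul_of_nonneg_right (le_abs_self _) (norm_nonneg _)
        _ ≤ |Lh| * 1 := mul_le_mul_of_nonneg_left hs1 (abs_nonneg _)
        _ = |Lh| := mul_one _
    have h5 := abs_le.mp h1
    have h6 := abs_le.mp h3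
    simp only
    linarith
  have key : ∀ x y, sInf (S x) - sInf (S y) ≤ (Lf + Lh) * ‖x - y‖ := by
    intro x y
    have h2 : sInf (S x) - (Lf + Lh) * ‖x - y‖ ≤ sInf (S y) := by
      refine le_csInf (hne y) ?_
      rintro a ⟨s, hs, rfl⟩
      have hs1 : ‖s‖ ≤ 1 := by simpa using hs
      have hx : sInf (S x) ≤ ⟪gradient f x, s⟫ + h (x + s) :=
        csInf_le (hbdd x) ⟨s, hs, rfl⟩
      have hinner : ⟪gradient f x, s⟫ - ⟪gradient f y, s⟫ ≤ Lf * ‖x - y‖ := by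
        have e : ⟪gradient f x, s⟫ - ⟪gradient f y, s⟫ = ⟪gradient f x - gradient f y, s⟫ := by
          rw [inner_sub_left]
        rw [e]
        calc ⟪gradient f x - gradient f y, s⟫ ≤ ‖gradient f x - gradient f y‖ * ‖s‖ :=
              real_inner_le_norm _ _
          _ ≤ ‖gradient f x - gradient f y‖ :=
              mul_le_of_le_one_right (norm_nonneg _) hs1
          _ ≤ Lf * ‖x - y‖ := hLf x y
      have hh : h (x + s) - h (y + s) ≤ Lh * ‖x - y‖ := by
        have := (abs_le.mp (hLh (x + s) (y + s))).2
        have e : ‖x + s - (y + s)‖ = ‖x - y‖ := by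
          congr 1
          abel
        linarith [e ▸ this]
      simp only
      linarith
    linarith
  intro x y
  have hxy := abs_le.mp (hLh x y)
  have k1 := key x y
  have k2 := key y x
  have e : ‖y - x‖ = ‖x - y‖ := norm_sub_rev _ _
  rw [e] at k2
  rw [hΨ x, hΨ y, abs_le]
  constructor <;> [skip; skip] <;>
  · simp only [hS] at k1 k2 ⊢
    linarith
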